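/- Let 0 ≤ b < d, φ(x) := exp(−x²/2) and m̂ := ∫_b^d φ(x) dx. For λ ≥ max(b², 1), define G(λ) := ∫_0^{1 − bλ^{-1/2}} ∫_b^{min(d, √λ(1−α₁))} φ(z) ( ∫_{−z}^{min(d, √λ α₁)} ( ∫_{max(b,y)}^{min(d, y + √λ(1−α₁))} φ(x) dx ) dy ) dz dα₁, where an inner integral over an interval [u, v] with v < u is taken to be 0. Then lim_{λ → ∞} G(λ) = 2 m̂ ( φ(b) − φ(d) ). -/

import Mathlib

set_option maxHeartbeats 1000000
set_option linter.unusedVariables false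

open MeasureTheory Real Filter

/-- `φ(x) = exp(−x²/2)`. -/
noncomputable def phi (x : ℝ) : ℝ := Real.exp (-(x ^ 2 / 2))

/-- Integral of `f` over the interval `[u, v]`, taken to be `0` when `v < u`. -/
noncomputable def oint (u v : ℝ) (f : ℝ → ℝ) : ℝ := ∫ x in Set.Ioc u v, f x

lemma phi_cont : Continuous phi := by
  unfold phi; continuity

lemma phi_nonneg (x : ℝ) : 0 ≤ phi x := (Real.exp_pos _).le

lemma phi_le_one (x : ℝ) : phi x ≤ 1 := by
  unfold phi
  rw [show (1:ℝ) = Real.exp 0 by simp]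
  apply Real.exp_le_exp.2
  nlinarith [sq_nonneg x]

lemma phi_integrable : Integrable phi := by
  have := integrable_exp_neg_mul_sq (b := (1/2:ℝ)) (by norm_num)
  convert this using 2 with x
  unfold phi; ring_nf

lemma phi_hasDeriv (x : ℝ) : HasDerivAt phi (-x * phi x) x := by
  have h1 : HasDerivAt (fun x : ℝ => -(x ^ 2 / 2)) (-x) x := by
    have := (hasDerivAt_pow 2 x).div_const 2
    have := this.neg
    exact this.congr_deriv (by norm_num)
  have := h1.exp
  exact this.congr_deriv (by unfold phi; ring)

noncomputable def Iphi (t : ℝ) : ℝ := ∫ x in (0:ℝ)..t, phi x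

lemma Iphi_cont : Continuous Iphi :=
  intervalIntegral.continuous_primitive (fun _ _ => phi_integrable.intervalIntegrable) 0

lemma oint_intervalIntegral {u v : ℝ} (h : u ≤ v) (f : ℝ → ℝ) :
    oint u v f = ∫ x in u..v, f x := (intervalIntegral.integral_of_le h).symm

lemma oint_empty {u v : ℝ} (h : v < u) (f : ℝ → ℝ) : oint u v f = 0 := by
  unfold oint
  rw [Set.Ioc_eq_empty (by exact fun hc => absurd hc (not_lt.2 h.le))]
  simp

lemma oint_phi_eq (u v : ℝ) : oint u v phi = Iphi (max u v) - Iphi u := by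
  rcases le_or_gt u v with h | h
  · rw [oint_intervalIntegral h, max_eq_right h]
    unfold Iphi
    rw [← intervalIntegral.integral_interval_sub_left
      (phi_integrable.intervalIntegrable) (phi_integrable.intervalIntegrable)]
  · rw [oint_empty h, max_eq_left h.le, sub_self]

lemma oint_phi_cont2 : Continuous (fun p : ℝ × ℝ => oint p.1 p.2 phi) := by
  simp only [oint_phi_eq]
  exact (Iphi_cont.comp (continuous_fst.max continuous_snd)).sub (Iphi_cont.comp continuous_fst)

lemma integral_x_phi (b d : ℝ) : ∫ x in b..d, x * phi x = phi b - phi d := by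
  have : ∀ x ∈ Set.uIcc b d, HasDerivAt (fun t => -phi t) (x * phi x) x := by
    intro x _
    have := (phi_hasDeriv x).neg
    exact this.congr_deriv (by ring)
  have hint : IntervalIntegrable (fun x => x * phi x) volume b d :=
    (continuous_id.mul phi_cont).intervalIntegrable _ _
  have := intervalIntegral.integral_eq_sub_of_hasDerivAt this hint
  rw [this]; ring

noncomputable def Psi (dd y : ℝ) : ℝ := oint y dd phi

lemma Psi_eq (dd y : ℝ) (h : y ≤ dd) : Psi dd y = ∫ x in y..dd, phi x :=
  oint_intervalIntegral h phi

lemma Psi_hasDeriv (dd y : ℝ) (h : y < dd) : HasDerivAt (Psi dd) (-phi y) y := by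
  have key : ∀ᶠ t in nhds y, Psi dd t = (∫ x in (0:ℝ)..dd, phi x) - ∫ x in (0:ℝ)..t, phi x := by
    filter_upwards [eventually_lt_nhds h] with t ht
    rw [Psi_eq dd t ht.le, ← intervalIntegral.integral_interval_sub_left
      (phi_integrable.intervalIntegrable) (phi_integrable.intervalIntegrable)]
  have h2 : HasDerivAt (fun t => (∫ x in (0:ℝ)..dd, phi x) - ∫ x in (0:ℝ)..t, phi x) (-phi y) y := by
    have hd : HasDerivAt (fun t => ∫ x in (0:ℝ)..t, phi x) (phi y) y :=
      intervalIntegral.integral_hasDerivAt_right (phi_integrable.intervalIntegrable)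
        (phi_integrable.aestronglyMeasurable.stronglyMeasurableAtFilter) phi_cont.continuousAt
    simpa using (hd.const_sub (∫ x in (0:ℝ)..dd, phi x))
  exact h2.congr_of_eventuallyEq key

lemma Iphi_hasDeriv (t : ℝ) : HasDerivAt Iphi (phi t) t :=
  intervalIntegral.integral_hasDerivAt_right (phi_integrable.intervalIntegrable)
    (phi_integrable.aestronglyMeasurable.stronglyMeasurableAtFilter) phi_cont.continuousAt

noncomputable def Hfun (b d z : ℝ) : ℝ := oint (-z) d (fun y => oint (max b y) d phi)

noncomputable def Flim (b d : ℝ) : ℝ := oint b d (fun z => phi z * Hfun b d z)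

lemma J_eq {b d : ℝ} (hbd : b ≤ d) : (∫ y in Set.Ioc b d, (Iphi d - Iphi y))
    = phi b - phi d - b * (Iphi d - Iphi b) := by
  rw [← intervalIntegral.integral_of_le hbd]
  have hder : ∀ y ∈ Set.uIcc b d,
      HasDerivAt (fun t => t * (Iphi d - Iphi t) - phi t) (Iphi d - Iphi y) y := by
    intro y _
    have h1 : HasDerivAt (fun t : ℝ => t * (Iphi d - Iphi t))
        (1 * (Iphi d - Iphi y) + y * (0 - phi y)) y :=
      (hasDerivAt_id y).mul ((hasDerivAt_const y (Iphi d)).sub (Iphi_hasDeriv y))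
    have := h1.sub (phi_hasDeriv y)
    exact this.congr_deriv (by ring)
  have hint : IntervalIntegrable (fun y => Iphi d - Iphi y) volume b d :=
    (continuous_const.sub Iphi_cont).intervalIntegrable _ _
  rw [intervalIntegral.integral_eq_sub_of_hasDerivAt hder hint]
  ring

lemma Hfun_eq {b d : ℝ} (hb : 0 ≤ b) (hbd : b < d) {z : ℝ} (hz : z ∈ Set.Ioc b d) :
    Hfun b d z = (b + z) * (Iphi d - Iphi b) + (phi b - phi d - b * (Iphi d - Iphi b)) := by
  have hzb : -z ≤ b := by linarith [hz.1, hb]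
  have hbd' : b ≤ d := hbd.le
  unfold Hfun oint
  have hcongr : ∀ y ∈ Set.Ioc (-z) d,
      (fun y => ∫ x in Set.Ioc (max b y) d, phi x) y = Iphi d - Iphi (max b y) := by
    intro y hy
    have h1 := oint_phi_eq (max b y) d
    rw [max_eq_right (max_le hbd' hy.2)] at h1
    simpa [oint] using h1
  rw [setIntegral_congr_fun measurableSet_Ioc hcongr]
  rw [← Set.Ioc_union_Ioc_eq_Ioc hzb hbd']
  have hcont : Continuous fun y : ℝ => Iphi d - Iphi (max b y) := by
    have := Iphi_cont
    fun_prop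
  rw [setIntegral_union ((Set.Ioc_disjoint_Ioc_of_le le_rfl)) measurableSet_Ioc
    hcont.integrableOn_Ioc hcont.integrableOn_Ioc]
  have e1 : ∀ y ∈ Set.Ioc (-z) b, Iphi d - Iphi (max b y) = Iphi d - Iphi b := by
    intro y hy; rw [max_eq_left hy.2]
  have e2 : ∀ y ∈ Set.Ioc b d, Iphi d - Iphi (max b y) = Iphi d - Iphi y := by
    intro y hy; rw [max_eq_right hy.1.le]
  rw [setIntegral_congr_fun measurableSet_Ioc e1, setIntegral_congr_fun measurableSet_Ioc e2,
    setIntegral_const, J_eq hbd', Measure.real, Real.volume_Ioc,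
    ENNReal.toReal_ofReal (by linarith [hz.1, hz.2, hb]), smul_eq_mul]
  ring

lemma Flim_eq {b d : ℝ} (hb : 0 ≤ b) (hbd : b < d) :
    Flim b d = 2 * (∫ x in b..d, phi x) * (phi b - phi d) := by
  have hm : (∫ x in b..d, phi x) = Iphi d - Iphi b := by
    have h1 := oint_phi_eq b d
    rw [max_eq_right hbd.le] at h1
    rw [intervalIntegral.integral_of_le hbd.le]
    simpa [oint] using h1
  set m := Iphi d - Iphi b with hmdef
  set J := phi b - phi d - b * m with hJ
  unfold Flim oint
  have hcongr : ∀ z ∈ Set.Ioc b d,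
      (fun z => phi z * Hfun b d z) z = phi z * ((b + z) * m + J) := by
    intro z hz; simp only; rw [Hfun_eq hb hbd hz]
  rw [setIntegral_congr_fun measurableSet_Ioc hcongr, ← intervalIntegral.integral_of_le hbd.le]
  have expand : ∀ z : ℝ, phi z * ((b + z) * m + J) = (b * m + J) * phi z + m * (z * phi z) := by
    intro z; ring
  simp only [expand]
  rw [intervalIntegral.integral_add
    ((by have := phi_cont; fun_prop : Continuous fun x : ℝ => (b * m + J) * phi x).intervalIntegrable _ _)
    ((by have := phi_cont; fun_prop : Continuous fun x : ℝ => m * (x * phi x)).intervalIntegrable _ _),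
    intervalIntegral.integral_const_mul, intervalIntegral.integral_const_mul,
    integral_x_phi, hm]
  ring

noncomputable def gfun (b d s a : ℝ) : ℝ :=
  oint b (min d (s * (1 - a))) (fun z => phi z *
    oint (-z) (min d (s * a)) (fun y =>
      oint (max b y) (min d (y + s * (1 - a))) phi))

section
variable (b d s : ℝ)

/-- inner integral as continuous function of (a, y) -/
lemma inner_cont : Continuous (fun p : ℝ × ℝ =>
    oint (max b p.2) (min d (p.2 + s * (1 - p.1))) phi) := by
  simp only [oint_phi_eq]
  have := Iphi_cont
  fun_prop

lemma Hl_sm : StronglyMeasurable (fun p : ℝ × ℝ =>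
    oint (-p.2) (min d (s * p.1)) (fun y =>
      oint (max b y) (min d (y + s * (1 - p.1))) phi)) := by
  set S : Set ((ℝ × ℝ) × ℝ) := {q | -q.1.2 < q.2 ∧ q.2 ≤ min d (s * q.1.1)} with hSdef
  have hS : MeasurableSet S := by
    apply MeasurableSet.inter
    · exact measurableSet_lt (f := fun q : (ℝ × ℝ) × ℝ => -q.1.2) (g := fun q => q.2)
        (by fun_prop) (by fun_prop)
    · exact measurableSet_le (f := fun q : (ℝ × ℝ) × ℝ => q.2)
        (g := fun q => min d (s * q.1.1)) (by fun_prop) (by fun_prop)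
  set F0 : (ℝ × ℝ) × ℝ → ℝ := S.indicator (fun q =>
    oint (max b q.2) (min d (q.2 + s * (1 - q.1.1))) phi) with hF0
  have hF0sm : StronglyMeasurable F0 := by
    apply StronglyMeasurable.indicator _ hS
    exact ((inner_cont b d s).comp (by fun_prop :
      Continuous (fun q : (ℝ × ℝ) × ℝ => (q.1.1, q.2)))).stronglyMeasurable
  have key : ∀ p : ℝ × ℝ, oint (-p.2) (min d (s * p.1)) (fun y =>
      oint (max b y) (min d (y + s * (1 - p.1))) phi) = ∫ y, F0 (p, y) := by
    intro p
    rw [show (fun y => F0 (p, y)) = (Set.Ioc (-p.2) (min d (s * p.1))).indicator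
        (fun y => oint (max b y) (min d (y + s * (1 - p.1))) phi) by
      funext y
      simp [hF0, Set.indicator_apply, hSdef, Set.mem_Ioc]]
    rw [integral_indicator measurableSet_Ioc]
    rfl
  simp only [key]
  exact hF0sm.integral_prod_right'

lemma gfun_sm : StronglyMeasurable (gfun b d s) := by
  set S : Set (ℝ × ℝ) := {q | b < q.2 ∧ q.2 ≤ min d (s * (1 - q.1))} with hSdef
  have hS : MeasurableSet S := by
    apply MeasurableSet.inter
    · exact measurableSet_lt (f := fun _ : ℝ × ℝ => b) (g := fun q => q.2)
        (by fun_prop) (by fun_prop)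
    · exact measurableSet_le (f := fun q : ℝ × ℝ => q.2)
        (g := fun q => min d (s * (1 - q.1))) (by fun_prop) (by fun_prop)
  set F0 : ℝ × ℝ → ℝ := S.indicator (fun p => phi p.2 *
    oint (-p.2) (min d (s * p.1)) (fun y =>
      oint (max b y) (min d (y + s * (1 - p.1))) phi)) with hF0
  have hF0sm : StronglyMeasurable F0 := by
    apply StronglyMeasurable.indicator _ hS
    exact ((phi_cont.comp continuous_snd).stronglyMeasurable).mul (Hl_sm b d s)
  have key : ∀ a : ℝ, gfun b d s a = ∫ z, F0 (a, z) := by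
    intro a
    rw [show (fun z => F0 (a, z)) = (Set.Ioc b (min d (s * (1 - a)))).indicator
        (fun z => phi z * oint (-z) (min d (s * a)) (fun y =>
          oint (max b y) (min d (y + s * (1 - a))) phi)) by
      funext z
      simp [hF0, Set.indicator_apply, hSdef, Set.mem_Ioc]]
    rw [integral_indicator measurableSet_Ioc]
    rfl
  simp only [funext key]
  exact hF0sm.integral_prod_right'
end

lemma vol_toReal_le {u v M : ℝ} (hM : 0 ≤ M) (h : v - u ≤ M) :
    (volume (Set.Ioc u v)).toReal ≤ M := by
  rw [Real.volume_Ioc]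
  rcases le_or_gt (v - u) 0 with h0 | h0
  · rw [ENNReal.ofReal_eq_zero.2 h0]; simpa using hM
  · rw [ENNReal.toReal_ofReal h0.le]; exact h

lemma oint_abs_le {u v : ℝ} {f : ℝ → ℝ} {C M : ℝ} (hC : 0 ≤ C) (hM : 0 ≤ M)
    (hlen : v - u ≤ M) (hf : ∀ x ∈ Set.Ioc u v, |f x| ≤ C) : |oint u v f| ≤ C * M := by
  have h1 : ‖∫ x in Set.Ioc u v, f x‖ ≤ C * (volume (Set.Ioc u v)).toReal := by
    apply norm_setIntegral_le_of_norm_le_const measure_Ioc_lt_top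
    intro x hx; rw [Real.norm_eq_abs]; exact hf x hx
  rw [Real.norm_eq_abs] at h1
  calc |oint u v f| ≤ C * (volume (Set.Ioc u v)).toReal := h1
    _ ≤ C * M := mul_le_mul_of_nonneg_left (vol_toReal_le hM hlen) hC

section
variable {b d s : ℝ} (hb : 0 ≤ b) (hbd : b < d)

lemma bound_inner (hb : 0 ≤ b) (hbd : b < d) (u v : ℝ) (hu : b ≤ u) (hv : v ≤ d) :
    |oint u v phi| ≤ d - b := by
  have := oint_abs_le (f := phi) (u := u) (v := v) (C := 1) (M := d - b)
    zero_le_one (by linarith) (by linarith)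
    (fun x _ => by rw [abs_of_nonneg (phi_nonneg x)]; exact phi_le_one x)
  simpa using this

lemma bound_H (hb : 0 ≤ b) (hbd : b < d) (a s z : ℝ) (hz : b < z) (hzd : z ≤ d) :
    |oint (-z) (min d (s * a)) (fun y => oint (max b y) (min d (y + s * (1 - a))) phi)|
      ≤ (d - b) * (2 * d) := by
  apply oint_abs_le (by linarith) (by linarith)
  · have : min d (s * a) ≤ d := min_le_left _ _
    linarith
  · intro y _
    exact bound_inner hb hbd _ _ (le_max_left _ _) (min_le_left _ _)

lemma bound_g (hb : 0 ≤ b) (hbd : b < d) (s a : ℝ) :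
    |gfun b d s a| ≤ ((d - b) * (2 * d)) * (d - b) := by
  apply oint_abs_le (by nlinarith) (by linarith)
  · have : min d (s * (1 - a)) ≤ d := min_le_left _ _
    linarith
  · intro z hz
    rw [abs_mul]
    have h1 : |phi z| ≤ 1 := by rw [abs_of_nonneg (phi_nonneg z)]; exact phi_le_one z
    have h2 := bound_H hb hbd a s z hz.1 (le_trans hz.2 (min_le_left _ _))
    calc |phi z| * _ ≤ 1 * ((d - b) * (2 * d)) :=
          mul_le_mul h1 h2 (abs_nonneg _) zero_le_one
      _ = (d - b) * (2 * d) := one_mul _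

lemma g_eq_F (hb : 0 ≤ b) (hbd : b < d) {s a : ℝ} (h1 : d ≤ s * a) (h2 : 2 * d ≤ s * (1 - a)) :
    gfun b d s a = Flim b d := by
  have hd0 : 0 ≤ d := le_trans hb hbd.le
  unfold gfun Flim Hfun
  rw [min_eq_left (by linarith : d ≤ s * (1 - a)), min_eq_left h1]
  unfold oint
  apply setIntegral_congr_fun measurableSet_Ioc
  intro z hz
  simp only
  congr 1
  apply setIntegral_congr_fun measurableSet_Ioc
  intro y hy
  simp only
  have hy1 : -d < y := lt_of_le_of_lt (neg_le_neg hz.2) hy.1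
  rw [min_eq_left (by linarith)]
end


noncomputable def Cg (b d : ℝ) : ℝ := ((d - b) * (2 * d)) * (d - b)

lemma main_est {b d : ℝ} (hb : 0 ≤ b) (hbd : b < d) {s : ℝ} (hs : 3 * d + 1 ≤ s) :
    |oint 0 (1 - b / s) (gfun b d s) - Flim b d|
      ≤ ((Cg b d + |Flim b d|) * (3 * d - b) + |Flim b d| * b) / s := by
  have hd0 : 0 ≤ d := le_trans hb hbd.le
  have hs0 : 0 < s := by linarith
  set T := 1 - b / s with hT
  set l := d / s with hl
  set u := 1 - 2 * d / s with hu
  set F := Flim b d with hF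
  set C := Cg b d + |F| with hC
  have hCgdef : Cg b d = ((d - b) * (2 * d)) * (d - b) := rfl
  have hCg0 : 0 ≤ Cg b d := by
    rw [hCgdef]
    have h1 : (0:ℝ) ≤ d - b := by linarith
    have h2 : (0:ℝ) ≤ 2 * d := by linarith
    exact mul_nonneg (mul_nonneg h1 h2) h1
  have hC0 : 0 ≤ C := add_nonneg hCg0 (abs_nonneg F)
  have hbs : b / s ≤ 1 := by rw [div_le_one hs0]; linarith
  have hT0 : 0 ≤ T := by rw [hT]; linarith
  have hl0 : 0 ≤ l := div_nonneg hd0 hs0.le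
  have hds : d / s ≤ 2 * d / s := by
    apply div_le_div_of_nonneg_right (by linarith) hs0.le
  have h2ds : 2 * d / s ≤ 1 := by
    rw [div_le_one hs0]; linarith
  have hlu : l ≤ u := by
    rw [hl, hu]
    have h3 : 3 * d / s ≤ 1 := by rw [div_le_one hs0]; linarith
    have : d / s + 2 * d / s = 3 * d / s := by ring
    linarith
  have hbs2 : b / s ≤ 2 * d / s := by
    apply div_le_div_of_nonneg_right (by linarith) hs0.le
  have huT : u ≤ T := by rw [hu, hT]; linarith
  have h0u : (0:ℝ) ≤ u := le_trans hl0 hlu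
  -- integrability
  have hInt : IntegrableOn (gfun b d s) (Set.Ioc 0 T) := by
    refine Integrable.mono' (g := fun _ => Cg b d)
      (integrableOn_const measure_Ioc_lt_top.ne)
      ((gfun_sm b d s).aestronglyMeasurable.restrict) ?_
    exact Eventually.of_forall fun a => by
      rw [Real.norm_eq_abs]; exact bound_g hb hbd s a
  have hIntF : IntegrableOn (fun _ : ℝ => F) (Set.Ioc 0 T) :=
    integrableOn_const measure_Ioc_lt_top.ne
  have hIntSub : IntegrableOn (fun a => gfun b d s a - F) (Set.Ioc 0 T) := hInt.sub hIntF
  -- set splitting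
  have hsub1 : Set.Ioc (0:ℝ) l ⊆ Set.Ioc 0 T := Set.Ioc_subset_Ioc_right (le_trans hlu huT)
  have hsub2 : Set.Ioc l u ⊆ Set.Ioc 0 T := Set.Ioc_subset_Ioc hl0 huT
  have hsub3 : Set.Ioc u T ⊆ Set.Ioc 0 T := Set.Ioc_subset_Ioc_left h0u
  have hsub4 : Set.Ioc (0:ℝ) u ⊆ Set.Ioc 0 T := Set.Ioc_subset_Ioc_right huT
  have hsplit2 : ∫ a in Set.Ioc (0:ℝ) T, (gfun b d s a - F)
      = (∫ a in Set.Ioc (0:ℝ) u, (gfun b d s a - F))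
        + ∫ a in Set.Ioc u T, (gfun b d s a - F) := by
    rw [← Set.Ioc_union_Ioc_eq_Ioc h0u huT]
    exact setIntegral_union (Set.Ioc_disjoint_Ioc_of_le le_rfl) measurableSet_Ioc
      (hIntSub.mono_set hsub4) (hIntSub.mono_set hsub3)
  have hsplit1 : ∫ a in Set.Ioc (0:ℝ) u, (gfun b d s a - F)
      = (∫ a in Set.Ioc (0:ℝ) l, (gfun b d s a - F))
        + ∫ a in Set.Ioc l u, (gfun b d s a - F) := by
    rw [← Set.Ioc_union_Ioc_eq_Ioc hl0 hlu]
    exact setIntegral_union (Set.Ioc_disjoint_Ioc_of_le le_rfl) measurableSet_Ioc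
      (hIntSub.mono_set hsub1) (hIntSub.mono_set hsub2)
  have hmid : ∫ a in Set.Ioc l u, (gfun b d s a - F) = 0 := by
    rw [setIntegral_congr_fun measurableSet_Ioc
      (g := fun _ => (0:ℝ)) ?_]
    · simp
    · intro a ha
      have h1 : d ≤ s * a := by
        have := (div_lt_iff₀ hs0).1 ha.1
        nlinarith
      have h2 : 2 * d ≤ s * (1 - a) := by
        have h' : 2 * d / s ≤ 1 - a := by
          have := ha.2; rw [hu] at this; linarith
        have := (div_le_iff₀ hs0).1 h'
        nlinarith
      simp [g_eq_F hb hbd h1 h2, hF]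
  -- bounds on end pieces
  have hbound : ∀ p q : ℝ, 0 ≤ q - p → |∫ a in Set.Ioc p q, (gfun b d s a - F)| ≤ C * (q - p) := by
    intro p q hpq
    have h1 : ‖∫ a in Set.Ioc p q, (gfun b d s a - F)‖ ≤ C * (volume (Set.Ioc p q)).toReal := by
      apply norm_setIntegral_le_of_norm_le_const measure_Ioc_lt_top
      intro a _
      rw [Real.norm_eq_abs]
      calc |gfun b d s a - F| ≤ |gfun b d s a| + |F| := abs_sub _ _
        _ ≤ Cg b d + |F| := by linarith [bound_g hb hbd s a, hCgdef.ge, hCgdef.le]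
    rw [Real.norm_eq_abs, Real.volume_Ioc, ENNReal.toReal_ofReal hpq] at h1
    exact h1
  -- total integral identity
  have hTF : ∫ _ in Set.Ioc (0:ℝ) T, F = T * F := by
    rw [setIntegral_const, Measure.real, Real.volume_Ioc, sub_zero, ENNReal.toReal_ofReal hT0, smul_eq_mul]
  have hE : oint 0 T (gfun b d s) - T * F = ∫ a in Set.Ioc (0:ℝ) T, (gfun b d s a - F) := by
    rw [integral_sub hInt hIntF, hTF]
    rfl
  have hEbound : |oint 0 T (gfun b d s) - T * F| ≤ C * l + C * (T - u) := by
    rw [hE, hsplit2, hsplit1, hmid, add_zero]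
    calc |(∫ a in Set.Ioc (0:ℝ) l, (gfun b d s a - F))
          + ∫ a in Set.Ioc u T, (gfun b d s a - F)|
        ≤ |∫ a in Set.Ioc (0:ℝ) l, (gfun b d s a - F)|
          + |∫ a in Set.Ioc u T, (gfun b d s a - F)| := abs_add_le _ _
      _ ≤ C * (l - 0) + C * (T - u) := add_le_add (hbound 0 l (by linarith))
          (hbound u T (by linarith))
      _ = C * l + C * (T - u) := by ring
  have hTF1 : |T * F - F| = (b / s) * |F| := by
    have : T * F - F = -(b / s) * F := by rw [hT]; ring
    rw [this, abs_mul, abs_neg, abs_of_nonneg (div_nonneg hb hs0.le)]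
  have final : |oint 0 T (gfun b d s) - F| ≤ C * l + C * (T - u) + (b / s) * |F| := by
    calc |oint 0 T (gfun b d s) - F|
        = |(oint 0 T (gfun b d s) - T * F) + (T * F - F)| := by rw [sub_add_sub_cancel]
      _ ≤ |oint 0 T (gfun b d s) - T * F| + |T * F - F| := abs_add_le _ _
      _ ≤ (C * l + C * (T - u)) + |T * F - F| := add_le_add_left hEbound _
      _ = C * l + C * (T - u) + (b / s) * |F| := by rw [hTF1]
  have harith : C * l + C * (T - u) + (b / s) * |F| = (C * (3 * d - b) + |F| * b) / s := by
    rw [hl, hT, hu]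
    field_simp
    ring
  rw [hC] at harith
  calc |oint 0 T (gfun b d s) - F| ≤ C * l + C * (T - u) + (b / s) * |F| := final
    _ = ((Cg b d + |F|) * (3 * d - b) + |F| * b) / s := harith


/-- asymptotics of the triple integral `G(λ)`. -/
theorem triple_integral_limit_G (b d : ℝ) (hb : 0 ≤ b) (hbd : b < d) :
    Tendsto (fun lam : ℝ =>
        oint 0 (1 - b / Real.sqrt lam) (fun a1 =>
          oint b (min d (Real.sqrt lam * (1 - a1))) (fun z => phi z *
            oint (-z) (min d (Real.sqrt lam * a1)) (fun y =>
              oint (max b y) (min d (y + Real.sqrt lam * (1 - a1))) phi))))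
      atTop
      (nhds (2 * (∫ x in b..d, phi x) * (phi b - phi d))) := by
  have hd0 : 0 ≤ d := le_trans hb hbd.le
  rw [← Flim_eq hb hbd]
  show Tendsto (fun lam : ℝ => oint 0 (1 - b / Real.sqrt lam) (gfun b d (Real.sqrt lam)))
    atTop (nhds (Flim b d))
  rw [tendsto_iff_norm_sub_tendsto_zero]
  have hsqrt : Tendsto Real.sqrt atTop atTop := by
    apply tendsto_atTop_atTop.2
    intro c
    refine ⟨c ^ 2, fun x hx => ?_⟩
    calc c ≤ |c| := le_abs_self c
      _ = Real.sqrt (c ^ 2) := (Real.sqrt_sq_eq_abs c).symm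
      _ ≤ Real.sqrt x := Real.sqrt_le_sqrt hx
  have h0 : Tendsto (fun lam : ℝ =>
      ((Cg b d + |Flim b d|) * (3 * d - b) + |Flim b d| * b) / Real.sqrt lam)
      atTop (nhds 0) :=
    Tendsto.div_atTop tendsto_const_nhds hsqrt
  apply squeeze_zero' (Eventually.of_forall fun _ => norm_nonneg _) ?_ h0
  filter_upwards [eventually_ge_atTop ((3 * d + 1) ^ 2)] with lam hlam
  have hsq : 3 * d + 1 ≤ Real.sqrt lam := by
    have h1 := Real.sqrt_le_sqrt hlam
    rwa [Real.sqrt_sq (by linarith)] at h1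
  simpa [Real.norm_eq_abs] using main_est hb hbd hsq
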